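/- For any Boolean function f and relevant variable i, as(f) = (1/2)·as(f^{(i,+)}) + (1/2)·as(f^{(i,-)}) + (1/2)·(1 - ∑_{U ⊆ [n]} f̂^{(i,+)}(U)·f̂^{(i,-)}(U)). -/

import Mathlib

open Finset

/-- Sign encoding of a Boolean value: `true ↦ 1`, `false ↦ -1`. -/
def bsign (a : Bool) : ℝ := if a then 1 else -1

/-- The character `χ_U(x) = ∏_{i ∈ U} x_i` (inputs encoded as Booleans). -/
def chi {n : ℕ} (U : Finset (Fin n)) (x : Fin n → Bool) : ℝ :=
  ∏ i ∈ U, bsign (x i)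

/-- Fourier coefficient `f̂(U) = 2^{-n} ∑_x f(x) χ_U(x)`. -/
noncomputable def fhat {n : ℕ} (f : (Fin n → Bool) → ℝ) (U : Finset (Fin n)) : ℝ :=
  (∑ x : Fin n → Bool, f x * chi U x) / 2 ^ n

/-- `f` is a (±1-valued) Boolean function. -/
def IsBoolean {n : ℕ} (f : (Fin n → Bool) → ℝ) : Prop := ∀ x, f x = 1 ∨ f x = -1

/-- Restriction `f^{(i,a)}` of `f` obtained by fixing the `i`-th input to `a`. -/
def restrict {n : ℕ} (f : (Fin n → Bool) → ℝ) (i : Fin n) (a : Bool) :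
    (Fin n → Bool) → ℝ :=
  fun x => f (Function.update x i a)

/-- Variable `i` is relevant for `f`. -/
def relevant {n : ℕ} (f : (Fin n → Bool) → ℝ) (i : Fin n) : Prop :=
  ∃ x, f x ≠ f (Function.update x i (!(x i)))

/-- Number of relevant variables of `f`. -/
noncomputable def numRel {n : ℕ} (f : (Fin n → Bool) → ℝ) : ℕ :=
  Nat.card {i : Fin n // relevant f i}

/-- Influence `I_i(f) = Pr[f(X) ≠ f(X ⊕ e_i)]` for uniform `X`. -/
noncomputable def influence {n : ℕ} (f : (Fin n → Bool) → ℝ) (i : Fin n) : ℝ :=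
  (Nat.card {x : Fin n → Bool // f x ≠ f (Function.update x i (!(x i)))} : ℝ) / 2 ^ n

/-- Average sensitivity `as(f) = ∑_i I_i(f)`. -/
noncomputable def avgSens {n : ℕ} (f : (Fin n → Bool) → ℝ) : ℝ :=
  ∑ i : Fin n, influence f i

/-- `IsNCFwith f L` : `f` is a nested canalizing function with the nested canalizing
structure recorded by the list `L` of triples `(π(j), α_j, β_j)`: fixing variable
`π(j)` to its canalizing value `α_j` forces the output `β_j`, and the restriction to
the non-canalizing value continues with the rest of the list; the base case is a
constant (±1) function. -/
inductive IsNCFwith : {n : ℕ} → ((Fin n → Bool) → ℝ) → List (Fin n × Bool × ℝ) → Prop where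
  | const {n : ℕ} (f : (Fin n → Bool) → ℝ) (b : ℝ) (hb : b = 1 ∨ b = -1)
      (h : ∀ x, f x = b) : IsNCFwith f []
  | step {n : ℕ} (f : (Fin n → Bool) → ℝ) (i : Fin n) (a : Bool) (b : ℝ)
      (hb : b = 1 ∨ b = -1) (L : List (Fin n × Bool × ℝ))
      (hrel : relevant f i)
      (hcan : ∀ x, x i = a → f x = b)
      (hrest : IsNCFwith (restrict f i (!a)) L) :
      IsNCFwith f ((i, a, b) :: L)

/-- `f` is a nested canalizing function. -/
def IsNCF {n : ℕ} (f : (Fin n → Bool) → ℝ) : Prop := ∃ L, IsNCFwith f L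

/-- Variable `i` is most dominant: some nested canalizing ordering starts with `i`. -/
def MostDominant {n : ℕ} (f : (Fin n → Bool) → ℝ) (i : Fin n) : Prop :=
  ∃ a b L, IsNCFwith f ((i, a, b) :: L)

/-- The canalized output values `β_1, β_2, …` recorded in `L` alternate in sign. -/
def AltBetas {n : ℕ} (L : List (Fin n × Bool × ℝ)) : Prop :=
  List.Chain' (fun p q : Fin n × Bool × ℝ => q.2.2 = -p.2.2) L


section Aux
variable {n : ℕ}

private lemma influence_eq' (g : (Fin n → Bool) → ℝ) (j : Fin n) :
    influence g j = (∑ x : Fin n → Bool,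
      if g x ≠ g (Function.update x j (!(x j))) then (1:ℝ) else 0) / 2 ^ n := by
  classical
  rw [influence, Nat.card_eq_fintype_card, Fintype.card_subtype, Finset.card_filter]
  congr 1
  push_cast
  rfl

private lemma sum_indep' (i : Fin n) (G : (Fin n → Bool) → ℝ)
    (hG : ∀ x b, G (Function.update x i b) = G x) (a : Bool) :
    ∑ x : Fin n → Bool, G x = 2 * ∑ x : Fin n → Bool, if x i = a then G x else 0 := by
  classical
  have inv : ∀ x : Fin n → Bool,
      Function.update (Function.update x i (!(x i))) i (!((Function.update x i (!(x i))) i)) = x := by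
    intro x
    simp [Function.update_idem, Function.update_self, Function.update_eq_self]
  let e : Equiv.Perm (Fin n → Bool) :=
    ⟨fun x => Function.update x i (!(x i)), fun x => Function.update x i (!(x i)), inv, inv⟩
  have key : (∑ x : Fin n → Bool, if x i = a then (0:ℝ) else G x)
      = ∑ x : Fin n → Bool, if x i = a then G x else 0 := by
    rw [← Equiv.sum_comp e (fun x => if x i = a then (0:ℝ) else G x)]
    apply Finset.sum_congr rfl
    intro x _
    show (if (Function.update x i (!(x i))) i = a then (0:ℝ)
        else G (Function.update x i (!(x i)))) = _
    rw [Function.update_self, hG x (!(x i))]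
    cases hx : x i <;> cases a <;> simp
  calc ∑ x : Fin n → Bool, G x
      = ∑ x : Fin n → Bool, ((if x i = a then G x else 0) + (if x i = a then 0 else G x)) := by
        apply Finset.sum_congr rfl; intro x _; by_cases h : x i = a <;> simp [h]
    _ = 2 * ∑ x : Fin n → Bool, if x i = a then G x else 0 := by
        rw [Finset.sum_add_distrib, key]; ring

private lemma chi_orth (x y : Fin n → Bool) :
    ∑ U : Finset (Fin n), chi U x * chi U y = if x = y then (2:ℝ) ^ n else 0 := by
  classical
  have step : ∑ U : Finset (Fin n), chi U x * chi U y
      = ∏ i : Fin n, (bsign (x i) * bsign (y i) + 1) := by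
    rw [Finset.prod_add, ← Finset.powerset_univ]
    apply Finset.sum_congr rfl
    intro U _
    simp [chi, Finset.prod_mul_distrib]
  rw [step]
  have factor : ∀ i : Fin n, bsign (x i) * bsign (y i) + 1
      = if x i = y i then (2:ℝ) else 0 := by
    intro i; cases hx : x i <;> cases hy : y i <;> norm_num [bsign]
  rw [Finset.prod_congr rfl fun i _ => factor i]
  by_cases h : x = y
  · subst h; simp
  · have : ∃ i, x i ≠ y i := by
      by_contra hc; push_neg at hc; exact h (funext hc)
    obtain ⟨i, hi⟩ := this
    rw [if_neg h]
    exact Finset.prod_eq_zero (Finset.mem_univ i) (by simp [hi])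

private lemma plancherel (g h : (Fin n → Bool) → ℝ) :
    ∑ U : Finset (Fin n), fhat g U * fhat h U
      = (∑ x : Fin n → Bool, g x * h x) / 2 ^ n := by
  classical
  have key : ∀ U : Finset (Fin n), fhat g U * fhat h U
      = (∑ x : Fin n → Bool, ∑ y : Fin n → Bool,
          g x * h y * (chi U x * chi U y)) / (2 ^ n * 2 ^ n) := by
    intro U
    rw [fhat, fhat, div_mul_div_comm, Finset.sum_mul_sum]
    congr 1
    apply Finset.sum_congr rfl; intro x _
    apply Finset.sum_congr rfl; intro y _
    ring
  rw [Finset.sum_congr rfl fun U _ => key U, ← Finset.sum_div]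
  rw [← Finset.sum_comm]
  have swap : ∑ x : Fin n → Bool, ∑ U : Finset (Fin n), ∑ y : Fin n → Bool,
      g x * h y * (chi U x * chi U y)
      = ∑ x : Fin n → Bool, g x * h x * 2 ^ n := by
    apply Finset.sum_congr rfl; intro x _
    rw [Finset.sum_comm]
    have : ∀ y : Fin n → Bool, ∑ U : Finset (Fin n), g x * h y * (chi U x * chi U y)
        = g x * h y * (if x = y then (2:ℝ)^n else 0) := by
      intro y; rw [← Finset.mul_sum, chi_orth]
    rw [Finset.sum_congr rfl fun y _ => this y]
    rw [Finset.sum_eq_single x]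
    · simp
    · intro y _ hyx; rw [if_neg (Ne.symm hyx), mul_zero]
    · intro hx; exact absurd (Finset.mem_univ x) hx
  rw [swap, ← Finset.sum_mul]
  have h2 : (2:ℝ) ^ n ≠ 0 := by positivity
  field_simp

private lemma restrict_update (f : (Fin n → Bool) → ℝ) (i : Fin n) (a b : Bool)
    (x : Fin n → Bool) : restrict f i a (Function.update x i b) = restrict f i a x := by
  simp [_root_.restrict, Function.update_idem]

private lemma restrict_apply_of_eq (f : (Fin n → Bool) → ℝ) (i : Fin n) (x : Fin n → Bool) :
    restrict f i (x i) x = f x := by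
  simp [_root_.restrict, Function.update_eq_self]

private lemma influence_restrict_self (f : (Fin n → Bool) → ℝ) (i : Fin n) (a : Bool) :
    influence (restrict f i a) i = 0 := by
  classical
  rw [influence_eq']
  have : ∀ x : Fin n → Bool,
      (if restrict f i a x ≠ restrict f i a (Function.update x i (!(x i))) then (1:ℝ) else 0) = 0 := by
    intro x
    rw [restrict_update, if_neg (by simp)]
  rw [Finset.sum_congr rfl fun x _ => this x]
  simp

private lemma influence_restrict_ne (f : (Fin n → Bool) → ℝ) (i j : Fin n) (hij : j ≠ i) :
    influence (restrict f i true) j + influence (restrict f i false) j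
      = 2 * influence f j := by
  classical
  have hG : ∀ (a : Bool) (x : Fin n → Bool) (b : Bool),
      (if restrict f i a (Function.update x i b)
          ≠ restrict f i a (Function.update (Function.update x i b) j
              (!((Function.update x i b) j))) then (1:ℝ) else 0)
      = (if restrict f i a x ≠ restrict f i a (Function.update x j (!(x j))) then (1:ℝ) else 0) := by
    intro a x b
    have h1 : (Function.update x i b) j = x j := Function.update_of_ne hij _ _
    have h2 : Function.update (Function.update x i b) j (!(x j))
        = Function.update (Function.update x j (!(x j))) i b :=
      Function.update_comm (Ne.symm hij) b (!(x j)) x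
    rw [h1, h2, restrict_update, restrict_update]
  have hmatch : ∀ (a : Bool) (x : Fin n → Bool), x i = a →
      (if restrict f i a x ≠ restrict f i a (Function.update x j (!(x j))) then (1:ℝ) else 0)
      = (if f x ≠ f (Function.update x j (!(x j))) then (1:ℝ) else 0) := by
    intro a x hxa
    have e1 : restrict f i a x = f x := by rw [← hxa, restrict_apply_of_eq]
    have e2 : restrict f i a (Function.update x j (!(x j)))
        = f (Function.update x j (!(x j))) := by
      have : (Function.update x j (!(x j))) i = a := by
        rw [Function.update_of_ne (Ne.symm hij), hxa]
      rw [← this, restrict_apply_of_eq]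
    rw [e1, e2]
  have half : ∀ a : Bool,
      influence (restrict f i a) j = 2 * (∑ x : Fin n → Bool,
        if x i = a then (if f x ≠ f (Function.update x j (!(x j))) then (1:ℝ) else 0) else 0) / 2 ^ n := by
    intro a
    rw [influence_eq', sum_indep' i _ (hG a) a]
    congr 2
    apply Finset.sum_congr rfl
    intro x _
    by_cases hx : x i = a
    · rw [if_pos hx, if_pos hx, hmatch a x hx]
    · rw [if_neg hx, if_neg hx]
  rw [half true, half false, influence_eq']
  have split : ∑ x : Fin n → Bool, (if f x ≠ f (Function.update x j (!(x j))) then (1:ℝ) else 0)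
      = (∑ x : Fin n → Bool, if x i = true then
            (if f x ≠ f (Function.update x j (!(x j))) then (1:ℝ) else 0) else 0)
        + (∑ x : Fin n → Bool, if x i = false then
            (if f x ≠ f (Function.update x j (!(x j))) then (1:ℝ) else 0) else 0) := by
    rw [← Finset.sum_add_distrib]
    apply Finset.sum_congr rfl
    intro x _
    cases hx : x i <;> simp
  rw [split]
  ring

private lemma influence_self_eq (f : (Fin n → Bool) → ℝ) (hf : IsBoolean f) (i : Fin n) :
    influence f i = (1 / 2) * (1 - (∑ x : Fin n → Bool,
      restrict f i true x * restrict f i false x) / 2 ^ n) := by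
  classical
  rw [influence_eq']
  have point : ∀ x : Fin n → Bool,
      (if f x ≠ f (Function.update x i (!(x i))) then (1:ℝ) else 0)
      = (1 - restrict f i true x * restrict f i false x) / 2 := by
    intro x
    have hxe : f x = f (Function.update x i (x i)) := by
      rw [Function.update_eq_self]
    simp only [_root_.restrict]
    cases hx : x i <;> rw [hx] at hxe <;>
      simp only [Bool.not_true, Bool.not_false] <;>
      rw [hxe] <;>
      rcases hf (Function.update x i true) with h1 | h1 <;>
      rcases hf (Function.update x i false) with h2 | h2 <;>
      rw [h1, h2] <;> norm_num
  rw [Finset.sum_congr rfl fun x _ => point x]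
  have hcard : ∑ _x : Fin n → Bool, (1:ℝ) = 2 ^ n := by
    simp [Finset.card_univ]
  rw [← Finset.sum_div, Finset.sum_sub_distrib, hcard]
  have h2 : (2:ℝ) ^ n ≠ 0 := by positivity
  field_simp

end Aux

/-- Average sensitivity in terms of the two restrictions at a relevant variable. -/
theorem avgSens_restrict {n : ℕ} (f : (Fin n → Bool) → ℝ) (hf : IsBoolean f)
    (i : Fin n) (hi : relevant f i) :
    avgSens f = (1 / 2) * avgSens (restrict f i true)
      + (1 / 2) * avgSens (restrict f i false)
      + (1 / 2) * (1 - ∑ U : Finset (Fin n),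
          fhat (restrict f i true) U * fhat (restrict f i false) U) := by
  classical
  have hsplit : ∀ g : (Fin n → Bool) → ℝ,
      avgSens g = influence g i + ∑ j ∈ Finset.univ.erase i, influence g j := by
    intro g
    rw [avgSens, ← Finset.add_sum_erase Finset.univ _ (Finset.mem_univ i)]
  have hmid : ∑ j ∈ Finset.univ.erase i, influence f j
      = (1/2) * ∑ j ∈ Finset.univ.erase i, influence (restrict f i true) j
        + (1/2) * ∑ j ∈ Finset.univ.erase i, influence (restrict f i false) j := by
    rw [Finset.mul_sum, Finset.mul_sum, ← Finset.sum_add_distrib]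
    apply Finset.sum_congr rfl
    intro j hj
    have hij : j ≠ i := (Finset.mem_erase.mp hj).1
    have := influence_restrict_ne f i j hij
    linarith
  rw [hsplit f, hsplit (restrict f i true), hsplit (restrict f i false),
    influence_restrict_self, influence_restrict_self, plancherel,
    influence_self_eq f hf i, hmid]
  ring
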